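/- Let A₂, A₃ ∈ ℝ with A₂ ≠ 0 and |A₃| = √2·|A₂|. Then the trace-type octupolar potential Φₜ(x₁,x₂,x₃) = A₂x₁²x₂ + A₃x₂²x₃ has exactly six critical points on the unit sphere S², three in each open hemisphere x₃ > 0 and x₃ < 0. -/

import Mathlib

set_option maxHeartbeats 1600000


/-- The trace-type octupolar potential `Φₜ(x) = A₂x₁²x₂ + A₃x₂²x₃`. -/
noncomputable def tracePot (A₂ A₃ : ℝ) (x : EuclideanSpace ℝ (Fin 3)) : ℝ :=
  A₂ * (x 0) ^ 2 * x 1 + A₃ * (x 1) ^ 2 * x 2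

/-- The set of critical points of the trace-type potential on the unit sphere. -/
noncomputable def traceCrit (A₂ A₃ : ℝ) : Set (EuclideanSpace ℝ (Fin 3)) :=
  {x | (x 0) ^ 2 + (x 1) ^ 2 + (x 2) ^ 2 = 1 ∧
    ∃ c : ℝ, gradient (tracePot A₂ A₃) x = c • x}

noncomputable def pt (a b : ℝ) : EuclideanSpace ℝ (Fin 3) :=
  (WithLp.equiv 2 (Fin 3 → ℝ)).symm ![0, a, b]

@[simp] lemma pt_apply0 (a b : ℝ) : pt a b 0 = 0 := rfl
@[simp] lemma pt_apply1 (a b : ℝ) : pt a b 1 = a := rfl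
@[simp] lemma pt_apply2 (a b : ℝ) : pt a b 2 = b := rfl

lemma pt_inj {a b a' b' : ℝ} (h : pt a b = pt a' b') : a = a' ∧ b = b' :=
  ⟨by simpa using congrArg (fun v : EuclideanSpace ℝ (Fin 3) => v 1) h,
   by simpa using congrArg (fun v : EuclideanSpace ℝ (Fin 3) => v 2) h⟩

lemma pt_ne {a b a' b' : ℝ} (h : a ≠ a' ∨ b ≠ b') : pt a b ≠ pt a' b' := by
  intro he
  rcases pt_inj he with ⟨h1, h2⟩
  tauto

lemma tracePot_hasGradient (A₂ A₃ : ℝ) (x : EuclideanSpace ℝ (Fin 3)) :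
    HasGradientAt (tracePot A₂ A₃)
      ((WithLp.equiv 2 (Fin 3 → ℝ)).symm
        ![2 * A₂ * x 0 * x 1, A₂ * (x 0) ^ 2 + 2 * A₃ * x 1 * x 2, A₃ * (x 1) ^ 2]) x := by
  have h0 : HasFDerivAt (𝕜 := ℝ) (fun y : EuclideanSpace ℝ (Fin 3) => y 0)
      (EuclideanSpace.proj (0 : Fin 3)) x :=
    ContinuousLinearMap.hasFDerivAt (𝕜 := ℝ) (EuclideanSpace.proj (0 : Fin 3))
  have h1 : HasFDerivAt (𝕜 := ℝ) (fun y : EuclideanSpace ℝ (Fin 3) => y 1)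
      (EuclideanSpace.proj (1 : Fin 3)) x :=
    ContinuousLinearMap.hasFDerivAt (𝕜 := ℝ) (EuclideanSpace.proj (1 : Fin 3))
  have h2 : HasFDerivAt (𝕜 := ℝ) (fun y : EuclideanSpace ℝ (Fin 3) => y 2)
      (EuclideanSpace.proj (2 : Fin 3)) x :=
    ContinuousLinearMap.hasFDerivAt (𝕜 := ℝ) (EuclideanSpace.proj (2 : Fin 3))
  have hD := ((((h0.mul h0).const_mul A₂).mul h1).add (((h1.mul h1).const_mul A₃).mul h2))
  rw [hasGradientAt_iff_hasFDerivAt]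
  have hfun : tracePot A₂ A₃ =
      fun y : EuclideanSpace ℝ (Fin 3) => A₂ * (y 0 * y 0) * y 1 + A₃ * (y 1 * y 1) * y 2 := by
    funext y; simp only [tracePot]; ring
  rw [hfun]
  refine hD.congr_fderiv ?_
  ext v
  simp [InnerProductSpace.toDual_apply_apply, PiLp.inner_apply, Fin.sum_univ_three,
    WithLp.equiv_symm_apply]
  ring

lemma mem_traceCrit_iff (A₂ A₃ : ℝ) (x : EuclideanSpace ℝ (Fin 3)) :
    x ∈ traceCrit A₂ A₃ ↔
      (x 0) ^ 2 + (x 1) ^ 2 + (x 2) ^ 2 = 1 ∧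
      ∃ c : ℝ, 2 * A₂ * x 0 * x 1 = c * x 0 ∧
        A₂ * (x 0) ^ 2 + 2 * A₃ * x 1 * x 2 = c * x 1 ∧
        A₃ * (x 1) ^ 2 = c * x 2 := by
  unfold traceCrit
  simp only [Set.mem_setOf_eq, (tracePot_hasGradient A₂ A₃ x).gradient]
  refine and_congr_right fun _ => exists_congr fun c => ?_
  constructor
  · intro hg
    refine ⟨?_, ?_, ?_⟩
    · simpa [WithLp.equiv_symm_apply] using
        congrArg (fun v : EuclideanSpace ℝ (Fin 3) => v 0) hg
    · simpa [WithLp.equiv_symm_apply] using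
        congrArg (fun v : EuclideanSpace ℝ (Fin 3) => v 1) hg
    · simpa [WithLp.equiv_symm_apply] using
        congrArg (fun v : EuclideanSpace ℝ (Fin 3) => v 2) hg
  · rintro ⟨e0, e1, e2⟩
    ext i
    fin_cases i <;>
      simp [WithLp.equiv_symm_apply, e0, e1, e2]

theorem stmt16 (A₂ A₃ : ℝ) (hA₂ : A₂ ≠ 0) (h : |A₃| = Real.sqrt 2 * |A₂|) :
    (traceCrit A₂ A₃).encard = 6 ∧
    {x ∈ traceCrit A₂ A₃ | 0 < x 2}.encard = 3 ∧
    {x ∈ traceCrit A₂ A₃ | x 2 < 0}.encard = 3 := by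
  have hb2 : A₃ ^ 2 = 2 * A₂ ^ 2 := by
    have h2 : |A₃| ^ 2 = (Real.sqrt 2 * |A₂|) ^ 2 := by rw [h]
    rw [mul_pow, Real.sq_sqrt (by norm_num : (2:ℝ) ≥ 0)] at h2
    simpa [sq_abs] using h2
  have hA₃ : A₃ ≠ 0 := by
    intro h0
    apply hA₂
    rw [h0] at hb2
    nlinarith [sq_nonneg A₂]
  set s : ℝ := Real.sqrt (2/3) with hs_def
  set t : ℝ := Real.sqrt (1/3) with ht_def
  have hs : s ^ 2 = 2/3 := Real.sq_sqrt (by norm_num)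
  have ht : t ^ 2 = 1/3 := Real.sq_sqrt (by norm_num)
  have hspos : 0 < s := Real.sqrt_pos.mpr (by norm_num)
  have htpos : 0 < t := Real.sqrt_pos.mpr (by norm_num)
  have ht1 : t < 1 := by nlinarith
  have hst : s ≠ t := by intro he; rw [he] at hs; linarith [ht]
  -- main set identity
  have hmain : traceCrit A₂ A₃ =
      {pt 0 1, pt 0 (-1), pt s t, pt s (-t), pt (-s) t, pt (-s) (-t)} := by
    ext x
    rw [mem_traceCrit_iff]
    simp only [Set.mem_insert_iff, Set.mem_singleton_iff]
    constructor
    · rintro ⟨N, c, E1, E2, E3⟩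
      have hx0 : x 0 = 0 := by
        by_contra hx
        by_cases hy : x 1 = 0
        · apply hx
          have h' : A₂ * (x 0) ^ 2 = 0 := by
            rw [hy] at E2; linarith [E2]
          have := (mul_eq_zero.mp h').resolve_left hA₂
          exact pow_eq_zero_iff (n := 2) (by norm_num) |>.mp this
        · have hc : c = 2 * A₂ * x 1 :=
            (mul_right_cancel₀ hx (by linear_combination E1)).symm
          have hz : A₃ * x 1 = 2 * A₂ * x 2 :=
            mul_right_cancel₀ hy (by linear_combination E3 + (x 2) * hc)
          apply hx
          have key2 : A₂ ^ 2 * (x 0) ^ 2 = 0 := by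
            linear_combination A₂ * E2 + (A₂ * x 1) * hc + (A₃ * x 1) * hz - (x 1) ^ 2 * hb2
          have := (mul_eq_zero.mp key2).resolve_left (pow_ne_zero 2 hA₂)
          exact pow_eq_zero_iff (n := 2) (by norm_num) |>.mp this
      by_cases hy : x 1 = 0
      · have hz2 : (x 2) ^ 2 = 1 := by rw [hx0, hy] at N; linarith
        have : (x 2 - 1) * (x 2 + 1) = 0 := by linear_combination hz2
        rcases mul_eq_zero.mp this with h' | h'
        · left
          ext i; fin_cases i <;> simp [hx0, hy] <;> linarith
        · right; left
          ext i; fin_cases i <;> simp [hx0, hy] <;> linarith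
      · have hc : c = 2 * A₃ * x 2 :=
          (mul_right_cancel₀ hy (by linear_combination E2 - (A₂ * x 0) * hx0)).symm
        have hyz : (x 1) ^ 2 = 2 * (x 2) ^ 2 := by
          have h5 : A₃ * (x 1) ^ 2 = A₃ * (2 * (x 2) ^ 2) := by
            linear_combination E3 + (x 2) * hc
          exact mul_left_cancel₀ hA₃ h5
        have hz2 : (x 2) ^ 2 = 1/3 := by
          rw [hx0] at N; nlinarith
        have hy2 : (x 1) ^ 2 = 2/3 := by rw [hyz, hz2]; norm_num
        have hzc : (x 2 - t) * (x 2 + t) = 0 := by linear_combination hz2 - ht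
        have hyc : (x 1 - s) * (x 1 + s) = 0 := by linear_combination hy2 - hs
        rcases mul_eq_zero.mp hyc with hy' | hy' <;> rcases mul_eq_zero.mp hzc with hz' | hz'
        · right; right; left
          ext i; fin_cases i <;> simp [hx0] <;> linarith
        · right; right; right; left
          ext i; fin_cases i <;> simp [hx0] <;> linarith
        · right; right; right; right; left
          ext i; fin_cases i <;> simp [hx0] <;> linarith
        · right; right; right; right; right
          ext i; fin_cases i <;> simp [hx0] <;> linarith
    · rintro (rfl | rfl | rfl | rfl | rfl | rfl)
      · exact ⟨by simp, 0, by simp⟩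
      · exact ⟨by simp, 0, by simp⟩
      · refine ⟨by simp [hs, ht]; linarith, 2 * A₃ * t, by simp, by simp; ring,
          by simp; linear_combination A₃ * hs - 2 * A₃ * ht⟩
      · refine ⟨by simp [hs, ht]; linarith, -(2 * A₃ * t), by simp, by simp; ring,
          by simp; linear_combination A₃ * hs - 2 * A₃ * ht⟩
      · refine ⟨by simp [hs, ht]; linarith, 2 * A₃ * t, by simp, by simp; ring,
          by simp; linear_combination A₃ * hs - 2 * A₃ * ht⟩
      · refine ⟨by simp [hs, ht]; linarith, -(2 * A₃ * t), by simp, by simp; ring,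
          by simp; linear_combination A₃ * hs - 2 * A₃ * ht⟩
  -- distinctness facts
  have hne12 : pt (0:ℝ) 1 ≠ pt 0 (-1) := pt_ne (Or.inr (by norm_num))
  have hpos : {x ∈ traceCrit A₂ A₃ | 0 < x 2} = {pt 0 1, pt s t, pt (-s) t} := by
    rw [hmain]
    ext x
    simp only [Set.mem_setOf_eq, Set.mem_insert_iff, Set.mem_singleton_iff]
    constructor
    · rintro ⟨(rfl | rfl | rfl | rfl | rfl | rfl), hx2⟩ <;>
        simp only [pt_apply2] at hx2
      · tauto
      · linarith
      · tauto
      · linarith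
      · tauto
      · linarith
    · rintro (rfl | rfl | rfl) <;> exact ⟨by tauto, by simpa using by linarith⟩
  have hneg : {x ∈ traceCrit A₂ A₃ | x 2 < 0} = {pt 0 (-1), pt s (-t), pt (-s) (-t)} := by
    rw [hmain]
    ext x
    simp only [Set.mem_setOf_eq, Set.mem_insert_iff, Set.mem_singleton_iff]
    constructor
    · rintro ⟨(rfl | rfl | rfl | rfl | rfl | rfl), hx2⟩ <;>
        simp only [pt_apply2] at hx2
      · linarith
      · tauto
      · linarith
      · tauto
      · linarith
      · tauto
    · rintro (rfl | rfl | rfl) <;> exact ⟨by tauto, by simpa using by linarith⟩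
  refine ⟨?_, ?_, ?_⟩
  · rw [hmain]
    rw [Set.encard_insert_of_notMem, Set.encard_insert_of_notMem,
      Set.encard_insert_of_notMem, Set.encard_insert_of_notMem,
      Set.encard_insert_of_notMem, Set.encard_singleton]
    · rfl
    · exact fun hm => pt_ne (a := -s) (b := t) (Or.inr (by linarith)) (Set.mem_singleton_iff.mp hm)
    · simp only [Set.mem_insert_iff, Set.mem_singleton_iff]
      push_neg
      exact ⟨pt_ne (Or.inr (by linarith)), pt_ne (Or.inl (by linarith))⟩
    · simp only [Set.mem_insert_iff, Set.mem_singleton_iff]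
      push_neg
      exact ⟨pt_ne (Or.inr (by linarith)), pt_ne (Or.inl (by linarith)),
        pt_ne (Or.inl (by linarith))⟩
    · simp only [Set.mem_insert_iff, Set.mem_singleton_iff]
      push_neg
      exact ⟨pt_ne (Or.inl (by linarith)), pt_ne (Or.inl (by linarith)),
        pt_ne (Or.inl (by linarith)), pt_ne (Or.inl (by linarith))⟩
    · simp only [Set.mem_insert_iff, Set.mem_singleton_iff]
      push_neg
      refine ⟨hne12, pt_ne (Or.inl (by linarith)), pt_ne (Or.inl (by linarith)),
        pt_ne (Or.inl (by linarith)), pt_ne (Or.inl (by linarith))⟩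
  · rw [hpos]
    rw [Set.encard_insert_of_notMem, Set.encard_insert_of_notMem, Set.encard_singleton]
    · rfl
    · exact fun hm => pt_ne (a := s) (b := t) (Or.inl (by linarith)) (Set.mem_singleton_iff.mp hm)
    · simp only [Set.mem_insert_iff, Set.mem_singleton_iff]
      push_neg
      exact ⟨pt_ne (Or.inl (by linarith)), pt_ne (Or.inl (by linarith))⟩
  · rw [hneg]
    rw [Set.encard_insert_of_notMem, Set.encard_insert_of_notMem, Set.encard_singleton]
    · rfl
    · exact fun hm =>
        pt_ne (a := s) (b := -t) (Or.inl (by linarith)) (Set.mem_singleton_iff.mp hm)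
    · simp only [Set.mem_insert_iff, Set.mem_singleton_iff]
      push_neg
      exact ⟨pt_ne (Or.inl (by linarith)), pt_ne (Or.inl (by linarith))⟩
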